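/- Let R be an object unital G-graded ring and M a graded unital left R-module. The following are equivalent: (i) M is a sum of simple graded submodules; (ii) M is a direct sum of simple graded submodules; (iii) every graded submodule of M is a direct summand (with graded complement). -/

import Mathlib

open CategoryTheory

/-- The arrows of a groupoid, bundled with their endpoints. -/
abbrev GArrow (G : Type*) [Groupoid G] := Σ a b : G, a ⟶ b

namespace GArrow

variable {G : Type*} [Groupoid G]

/-- The unit arrow at an object. -/
def unit (a : G) : GArrow G := ⟨a, a, 𝟙 a⟩

/-- The inverse arrow `σ⁻¹`. -/
def ginv (σ : GArrow G) : GArrow G := ⟨σ.2.1, σ.1, Groupoid.inv σ.2.2⟩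

/-- `Composable σ τ` means `d(σ) = r(τ)`, i.e. the product `στ` is defined. -/
def Composable (σ τ : GArrow G) : Prop := σ.1 = τ.2.1

/-- The product `στ` when `d(σ) = r(τ)`. -/
def comp (σ τ : GArrow G) (h : Composable σ τ) : GArrow G :=
  ⟨τ.1, σ.2.1, τ.2.2 ≫ eqToHom h.symm ≫ σ.2.2⟩

/-- The unit space `G₀`, as a set of arrows. -/
def GUnits (G : Type*) [Groupoid G] : Set (GArrow G) := Set.range unit

/-- The product of two sets of arrows: `Σ * Σ' = { στ : σ ∈ Σ, τ ∈ Σ', d(σ) = r(τ) }`. -/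
def setMul (A B : Set (GArrow G)) : Set (GArrow G) :=
  {ρ | ∃ σ ∈ A, ∃ τ ∈ B, ∃ h : Composable σ τ, ρ = comp σ τ h}

end GArrow

/-- An object unital `G`-grading on an associative, not necessarily unital, ring `R`:
`R = ⊕_{σ ∈ G} R_σ`, `R_σ R_τ ⊆ R_{στ}` for composable pairs, `R_σ R_τ = 0` otherwise,
each `R_e` (`e ∈ G₀`) is unital with identity `u e`, and
`1_{R_{r(σ)}} r = r 1_{R_{d(σ)}} = r` for every `r ∈ R_σ`. -/
structure OUGrading (G : Type*) [Groupoid G] (R : Type*) [NonUnitalRing R] where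
  component : GArrow G → AddSubgroup R
  sup_eq_top : (⨆ σ : GArrow G, component σ) = ⊤
  indep : iSupIndep component
  mul_mem : ∀ (σ τ : GArrow G) (h : GArrow.Composable σ τ), ∀ r ∈ component σ,
    ∀ s ∈ component τ, r * s ∈ component (GArrow.comp σ τ h)
  mul_eq_zero : ∀ (σ τ : GArrow G), ¬ GArrow.Composable σ τ → ∀ r ∈ component σ,
    ∀ s ∈ component τ, r * s = 0
  /-- The identity of the unital ring `R_e`, for each object (unit) `e`. -/
  u : G → R
  u_mem : ∀ a : G, u a ∈ component (GArrow.unit a)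
  u_left : ∀ σ : GArrow G, ∀ r ∈ component σ, u σ.2.1 * r = r
  u_right : ∀ σ : GArrow G, ∀ r ∈ component σ, r * u σ.1 = r

/-- The axioms of a left module over a not necessarily unital ring. -/
structure NUModule (R M : Type*) [NonUnitalRing R] [AddCommGroup M] [SMul R M] : Prop where
  smul_add : ∀ (r : R) (m n : M), r • (m + n) = r • m + r • n
  add_smul : ∀ (r s : R) (m : M), (r + s) • m = r • m + s • m
  mul_smul : ∀ (r s : R) (m : M), (r * s) • m = r • (s • m)

/-- A `G`-graded left module over a ring `R` with object unital `G`-grading `gr`. -/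
structure GrModule {G : Type*} [Groupoid G] {R : Type*} [NonUnitalRing R]
    (gr : OUGrading G R) (M : Type*) [AddCommGroup M] [SMul R M] where
  smul_add : ∀ (r : R) (m n : M), r • (m + n) = r • m + r • n
  add_smul : ∀ (r s : R) (m : M), (r + s) • m = r • m + s • m
  mul_smul : ∀ (r s : R) (m : M), (r * s) • m = r • (s • m)
  component : GArrow G → AddSubgroup M
  sup_eq_top : (⨆ σ : GArrow G, component σ) = ⊤
  indep : iSupIndep component
  smul_mem : ∀ (σ τ : GArrow G) (h : GArrow.Composable σ τ), ∀ r ∈ gr.component σ,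
    ∀ m ∈ component τ, r • m ∈ component (GArrow.comp σ τ h)
  smul_eq_zero : ∀ (σ τ : GArrow G), ¬ GArrow.Composable σ τ → ∀ r ∈ gr.component σ,
    ∀ m ∈ component τ, r • m = 0

/-- A graded module is graded unital if `1_{R_{r(σ)}} • m = m` for all homogeneous `m`
of degree `σ`. -/
def GrModule.IsUnital {G : Type*} [Groupoid G] {R : Type*} [NonUnitalRing R]
    {gr : OUGrading G R} {M : Type*} [AddCommGroup M] [SMul R M]
    (gm : GrModule gr M) : Prop :=
  ∀ σ : GArrow G, ∀ m ∈ gm.component σ, gr.u σ.2.1 • m = m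

/-- A graded homomorphism between graded modules with homogeneous components `cM`, `cN`. -/
def IsGrHom {G : Type*} [Groupoid G] {R : Type*} [NonUnitalRing R]
    {M N : Type*} [AddCommGroup M] [AddCommGroup N] [SMul R M] [SMul R N]
    (cM : GArrow G → AddSubgroup M) (cN : GArrow G → AddSubgroup N) (f : M → N) : Prop :=
  (∀ x y : M, f (x + y) = f x + f y) ∧ (∀ (r : R) (x : M), f (r • x) = r • f x) ∧
    (∀ σ : GArrow G, ∀ x ∈ cM σ, f x ∈ cN σ)

/-- A graded submodule: an additive subgroup closed under the `R`-action which is the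
sum of its homogeneous components. -/
def IsGrSubmodule {G : Type*} [Groupoid G] {R : Type*} [NonUnitalRing R]
    {gr : OUGrading G R} {M : Type*} [AddCommGroup M] [SMul R M]
    (gm : GrModule gr M) (N : AddSubgroup M) : Prop :=
  (∀ (r : R), ∀ m ∈ N, r • m ∈ N) ∧ N = ⨆ σ : GArrow G, (N ⊓ gm.component σ)

open Classical in
/-- The homogeneous component of degree `τ` of the `σ'`-suspension `R(σ')`:
`R(σ')_τ = R_{τσ'}` if `(τ, σ')` is composable and `{0}` otherwise. -/
noncomputable def suspComponent {G : Type*} [Groupoid G] {R : Type*} [NonUnitalRing R]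
    (gr : OUGrading G R) (σ' τ : GArrow G) : AddSubgroup R :=
  if h : GArrow.Composable τ σ' then gr.component (GArrow.comp τ σ' h) else ⊥

/-- The `σ'`-suspension `R(σ') = ⊕_τ R(σ')_τ` of `R`, as an additive subgroup of `R`. -/
noncomputable def suspension {G : Type*} [Groupoid G] {R : Type*} [NonUnitalRing R]
    (gr : OUGrading G R) (σ' : GArrow G) : AddSubgroup R :=
  ⨆ τ : GArrow G, suspComponent gr σ' τ

/-- A graded homomorphism from a graded left ideal `S` of `R` (with homogeneous
components `cS`) to a graded module with components `cN`. -/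
def IsGrHomOn {G : Type*} [Groupoid G] {R N : Type*} [NonUnitalRing R]
    [AddCommGroup N] [SMul R N] {S : AddSubgroup R}
    (cS : GArrow G → AddSubgroup R) (cN : GArrow G → AddSubgroup N) (f : ↥S → N) : Prop :=
  (∀ x y : ↥S, f (x + y) = f x + f y) ∧
  (∀ (r : R) (x y : ↥S), (y : R) = r * (x : R) → f y = r • f x) ∧
  (∀ τ : GArrow G, ∀ x : ↥S, (x : R) ∈ cS τ → f x ∈ cN τ)

/-- A graded module is free by suspension if it is the internal direct sum of graded
submodules, each gradedly isomorphic to a suspension `R(σᵢ)` of `R`. -/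
noncomputable def FreeBySuspension {G : Type*} [Groupoid G] {R : Type*} [NonUnitalRing R]
    {gr : OUGrading G R} {M : Type*} [AddCommGroup M] [SMul R M]
    (gm : GrModule gr M) : Prop :=
  ∃ (ι : Type*) (σs : ι → GArrow G) (f : ∀ i : ι, ↥(suspension gr (σs i)) → M),
    (∀ i : ι, IsGrHomOn (suspComponent gr (σs i)) gm.component (f i)) ∧
    (∀ i : ι, Function.Injective (f i)) ∧
    iSupIndep (fun i : ι => AddSubgroup.closure (Set.range (f i))) ∧
    (⨆ i : ι, AddSubgroup.closure (Set.range (f i))) = ⊤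

/-- The set of graded homomorphisms `R → N` of degree `σ`. -/
def HomDeg {G : Type*} [Groupoid G] {R N : Type*} [NonUnitalRing R]
    [AddCommGroup N] [SMul R N] (gr : OUGrading G R)
    (cN : GArrow G → AddSubgroup N) (σ : GArrow G) : Set (R → N) :=
  {f | (∀ x y : R, f (x + y) = f x + f y) ∧ (∀ r x : R, f (r * x) = r • f x) ∧
    (∀ (τ : GArrow G) (h : GArrow.Composable τ σ), ∀ x ∈ gr.component τ,
        f x ∈ cN (GArrow.comp τ σ h)) ∧
    (∀ τ : GArrow G, ¬ GArrow.Composable τ σ → ∀ x ∈ gr.component τ, f x = 0)}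

/-- `HOM_R(R, N) = ⊕_σ HOM_R(R, N)_σ`, the additive group generated by the graded
homomorphisms of some degree. -/
def HOM {G : Type*} [Groupoid G] {R N : Type*} [NonUnitalRing R]
    [AddCommGroup N] [SMul R N] (gr : OUGrading G R)
    (cN : GArrow G → AddSubgroup N) : AddSubgroup (R → N) :=
  AddSubgroup.closure (⋃ σ : GArrow G, HomDeg gr cN σ)

/-- The left `R`-action `(r · f)(x) = f(x r)` on maps `R → N`. -/
def rAct {R N : Type*} [NonUnitalRing R] (r : R) (f : R → N) : R → N :=
  fun x => f (x * r)

/-- `R · HOM_R(R, N)`, the unitary part of `HOM_R(R, N)` under the action `rAct`. -/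
def RHOM {G : Type*} [Groupoid G] {R N : Type*} [NonUnitalRing R]
    [AddCommGroup N] [SMul R N] (gr : OUGrading G R)
    (cN : GArrow G → AddSubgroup N) : AddSubgroup (R → N) :=
  AddSubgroup.closure {g | ∃ (r : R), ∃ f ∈ HOM gr cN, g = rAct r f}

/-- A bundled graded unital left `R`-module. -/
structure GrUMod {G : Type*} [Groupoid G] {R : Type*} [NonUnitalRing R]
    (gr : OUGrading G R) where
  carrier : Type*
  [acg : AddCommGroup carrier]
  [sm : SMul R carrier]
  str : GrModule gr carrier
  unital : str.IsUnital

attribute [instance] GrUMod.acg GrUMod.sm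

/-- A simple graded submodule: a nonzero graded submodule whose only graded submodules
are `⊥` and itself. -/
def GrSimpleSub {G R M : Type*} [Groupoid G] [NonUnitalRing R] [AddCommGroup M]
    [SMul R M] {gr : OUGrading G R} (gm : GrModule gr M) (N : AddSubgroup M) : Prop :=
  IsGrSubmodule gm N ∧ N ≠ ⊥ ∧
    ∀ K : AddSubgroup M, IsGrSubmodule gm K → K ≤ N → K = ⊥ ∨ K = N

section Stmt18Aux

open DirectSum

/-! ### Generic projection machinery for internal direct sums of additive subgroups -/

section Proj

variable {ι : Type*} [DecidableEq ι] {A : Type*} [AddCommGroup A] (c : ι → AddSubgroup A)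
  (hind : iSupIndep c) (htop : (⨆ i, c i) = ⊤)

/-- The family of subgroups as `ℤ`-submodules. -/
noncomputable def czi : ι → Submodule ℤ A := fun i => AddSubgroup.toIntSubmodule (c i)

lemma mem_czi {i : ι} {x : A} : x ∈ czi c i ↔ x ∈ c i := Iff.rfl

include hind htop

lemma internal : DirectSum.IsInternal (czi c) := by
  rw [DirectSum.isInternal_submodule_iff_iSupIndep_and_iSup_eq_top]
  constructor
  · exact (iSupIndep_map_orderIso_iff (AddSubgroup.toIntSubmodule (M := A))).mpr hind
  · have : (⨆ i, czi c i) = AddSubgroup.toIntSubmodule (⨆ i, c i) :=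
      (map_iSup (AddSubgroup.toIntSubmodule (M := A)) c).symm
    rw [this, htop]
    exact map_top _

/-- The decomposition equivalence. -/
noncomputable def decompEquiv : (DirectSum ι (fun i => czi c i)) ≃ₗ[ℤ] A :=
  LinearEquiv.ofBijective (DirectSum.coeLinearMap (czi c)) (internal c hind htop)

/-- Projection onto the `i`-th component. -/
noncomputable def gproj (i : ι) (x : A) : A := (((decompEquiv c hind htop).symm x) i : A)

lemma gproj_mem (i : ι) (x : A) : gproj c hind htop i x ∈ c i :=
  (((decompEquiv c hind htop).symm x) i).2

lemma gproj_add (i : ι) (x y : A) :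
    gproj c hind htop i (x + y) = gproj c hind htop i x + gproj c hind htop i y := by
  unfold gproj
  rw [map_add]
  rfl

lemma gproj_zero (i : ι) : gproj c hind htop i (0 : A) = 0 := by
  unfold gproj
  rw [map_zero]
  rfl

lemma gproj_of_mem {i : ι} {x : A} (hx : x ∈ c i) : gproj c hind htop i x = x := by
  unfold gproj decompEquiv
  rw [(internal c hind htop).ofBijective_coeLinearMap_of_mem (mem_czi c |>.mpr hx)]

lemma gproj_of_mem_ne {i j : ι} (hij : i ≠ j) {x : A} (hx : x ∈ c i) :
    gproj c hind htop j x = 0 := by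
  unfold gproj decompEquiv
  rw [(internal c hind htop).ofBijective_coeLinearMap_of_mem_ne hij (mem_czi c |>.mpr hx)]
  rfl

lemma gproj_exists_finset_sum (x : A) :
    ∃ s : Finset ι, x = ∑ i ∈ s, gproj c hind htop i x := by
  classical
  set e := decompEquiv c hind htop with he
  refine ⟨(e.symm x).support, ?_⟩
  have hx : x = e (e.symm x) := (e.apply_symm_apply x).symm
  conv_lhs => rw [hx, ← DirectSum.sum_support_of (e.symm x)]
  rw [map_sum]
  refine Finset.sum_congr rfl fun i _ => ?_
  show (DirectSum.coeLinearMap (czi c)) (DirectSum.of _ i _) = _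
  rw [DirectSum.coeLinearMap_of]
  rfl

end Proj

/-! ### Graded submodule lemmas -/

section Graded

variable {G R M : Type*} [Groupoid G] [NonUnitalRing R] [AddCommGroup M] [SMul R M]
variable {gr : OUGrading G R} (gm : GrModule gr M)

noncomputable local instance : DecidableEq (GArrow G) := Classical.decEq _

include gm

lemma gm_smul_zero (r : R) : r • (0 : M) = (0 : M) := by
  have h := gm.smul_add r 0 0
  rw [add_zero] at h
  have h2 : r • (0 : M) + r • (0 : M) = r • (0 : M) + 0 := by rw [← h, add_zero]
  exact add_left_cancel h2

lemma gm_smul_neg (r : R) (m : M) : r • (-m) = -(r • m) := by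
  have h : r • (-m) + r • m = 0 := by
    rw [← gm.smul_add, neg_add_cancel, gm_smul_zero gm]
  exact eq_neg_of_add_eq_zero_left h

lemma gm_zero_smul (m : M) : (0 : R) • m = 0 := by
  have h := gm.add_smul 0 0 m
  rw [add_zero] at h
  have h2 : (0 : R) • m + (0 : R) • m = (0 : R) • m + 0 := by rw [← h, add_zero]
  exact add_left_cancel h2

lemma gm_sum_smul {ι : Type*} (s : Finset ι) (f : ι → R) (m : M) :
    (∑ i ∈ s, f i) • m = ∑ i ∈ s, f i • m := by
  classical
  induction s using Finset.induction_on with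
  | empty => simpa using gm_zero_smul gm m
  | insert _ _ hx ih =>
      rw [Finset.sum_insert hx, Finset.sum_insert hx, gm.add_smul, ih]

/-- Projection onto the degree-`σ` component of `M`. -/
noncomputable def piM (σ : GArrow G) (m : M) : M :=
  gproj gm.component gm.indep gm.sup_eq_top σ m

lemma piM_mem (σ : GArrow G) (m : M) : piM gm σ m ∈ gm.component σ :=
  gproj_mem _ _ _ _ _

lemma piM_sum (m : M) : ∃ s : Finset (GArrow G), m = ∑ σ ∈ s, piM gm σ m :=
  gproj_exists_finset_sum _ _ _ m

/-- A subgroup satisfies the graded-sum condition iff it is stable under all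
homogeneous projections. -/
lemma graded_iff_proj (N : AddSubgroup M) :
    N = (⨆ σ : GArrow G, (N ⊓ gm.component σ)) ↔ ∀ m ∈ N, ∀ σ, piM gm σ m ∈ N := by
  constructor
  · intro h m hm σ
    rw [h] at hm
    refine AddSubgroup.iSup_induction (C := fun x => piM gm σ x ∈ N) _ hm ?_ ?_ ?_
    · intro τ x hx
      show piM gm σ x ∈ N
      by_cases hτσ : τ = σ
      · subst hτσ
        rw [show piM gm τ x = x from gproj_of_mem _ _ _ hx.2]
        exact hx.1
      · rw [show piM gm σ x = 0 from gproj_of_mem_ne _ _ _ hτσ hx.2]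
        exact N.zero_mem
    · show piM gm σ (0:M) ∈ N
      rw [show piM gm σ (0:M) = 0 from gproj_zero _ _ _ _]
      exact N.zero_mem
    · intro x y hx hy
      show piM gm σ (x + y) ∈ N
      rw [show piM gm σ (x + y) = piM gm σ x + piM gm σ y from gproj_add _ _ _ _ _ _]
      exact N.add_mem hx hy
  · intro h
    refine le_antisymm ?_ (iSup_le fun σ => inf_le_left)
    intro m hm
    obtain ⟨s, hs⟩ := piM_sum gm m
    rw [hs]
    refine AddSubgroup.sum_mem _ fun σ _ => ?_
    exact AddSubgroup.mem_iSup_of_mem σ ⟨h m hm σ, piM_mem gm σ m⟩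

lemma isGr_iff (N : AddSubgroup M) :
    IsGrSubmodule gm N ↔
      (∀ (r : R), ∀ m ∈ N, r • m ∈ N) ∧ ∀ m ∈ N, ∀ σ, piM gm σ m ∈ N := by
  unfold IsGrSubmodule
  rw [graded_iff_proj]

lemma isGr_bot : IsGrSubmodule gm (⊥ : AddSubgroup M) := by
  rw [isGr_iff]
  constructor
  · intro r m hm
    rw [AddSubgroup.mem_bot] at hm ⊢
    rw [hm, gm_smul_zero gm]
  · intro m hm σ
    rw [AddSubgroup.mem_bot] at hm ⊢
    rw [hm]
    exact gproj_zero _ _ _ _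

lemma isGr_inf {A B : AddSubgroup M} (hA : IsGrSubmodule gm A) (hB : IsGrSubmodule gm B) :
    IsGrSubmodule gm (A ⊓ B) := by
  rw [isGr_iff] at hA hB ⊢
  exact ⟨fun r m hm => ⟨hA.1 r m hm.1, hB.1 r m hm.2⟩,
    fun m hm σ => ⟨hA.2 m hm.1 σ, hB.2 m hm.2 σ⟩⟩

lemma isGr_sSup {S : Set (AddSubgroup M)} (h : ∀ N ∈ S, IsGrSubmodule gm N) :
    IsGrSubmodule gm (sSup S) := by
  rw [isGr_iff]
  have key : ∀ m ∈ sSup S, (∀ r : R, r • m ∈ sSup S) ∧ ∀ σ, piM gm σ m ∈ sSup S := by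
    intro m hm
    rw [sSup_eq_iSup'] at hm
    refine AddSubgroup.iSup_induction
      (C := fun x => (∀ r : R, r • x ∈ sSup S) ∧ ∀ σ, piM gm σ x ∈ sSup S) _ hm ?_ ?_ ?_
    · rintro ⟨N, hN⟩ x hx
      constructor
      · intro r
        exact le_sSup hN ((h N hN).1 r x hx)
      · intro σ
        exact le_sSup hN ((isGr_iff gm N |>.mp (h N hN)).2 x hx σ)
    · refine ⟨?_, ?_⟩
      · intro r; rw [gm_smul_zero gm]; exact (sSup S).zero_mem
      · intro σ; rw [show piM gm σ (0:M) = 0 from gproj_zero _ _ _ _]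
        exact (sSup S).zero_mem
    · intro x y hx hy
      refine ⟨?_, ?_⟩
      · intro r; rw [gm.smul_add]; exact (sSup S).add_mem (hx.1 r) (hy.1 r)
      · intro σ
        rw [show piM gm σ (x + y) = piM gm σ x + piM gm σ y from gproj_add _ _ _ _ _ _]
        exact (sSup S).add_mem (hx.2 σ) (hy.2 σ)
  exact ⟨fun r m hm => (key m hm).1 r, fun m hm σ => (key m hm).2 σ⟩

lemma isGr_sup {A B : AddSubgroup M} (hA : IsGrSubmodule gm A) (hB : IsGrSubmodule gm B) :
    IsGrSubmodule gm (A ⊔ B) := by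
  rw [← sSup_pair]
  refine isGr_sSup gm ?_
  rintro N (rfl | rfl) <;> simp_all

/-- The modular law in the lattice of additive subgroups. -/
lemma addSubgroup_modular (A B C : AddSubgroup M) (h : A ≤ C) :
    (A ⊔ B) ⊓ C = A ⊔ B ⊓ C := by
  apply AddSubgroup.toIntSubmodule.injective
  rw [map_inf, map_sup, map_sup, map_inf]
  exact sup_inf_assoc_of_le _ (AddSubgroup.toIntSubmodule.monotone h)

end Graded

end Stmt18Aux

section MainLemmas

variable {G R M : Type*} [Groupoid G] [NonUnitalRing R] [AddCommGroup M] [SMul R M]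
variable {gr : OUGrading G R} (gm : GrModule gr M)

noncomputable local instance : DecidableEq (GArrow G) := Classical.decEq _

/-- Projection onto the degree-`τ` component of `R`. -/
noncomputable def piR (gr' : OUGrading G R) (τ : GArrow G) (r : R) : R :=
  gproj gr'.component gr'.indep gr'.sup_eq_top τ r

lemma piR_mem (gr' : OUGrading G R) (τ : GArrow G) (r : R) :
    piR gr' τ r ∈ gr'.component τ := gproj_mem _ _ _ _ _

lemma piR_sum (gr' : OUGrading G R) (r : R) :
    ∃ s : Finset (GArrow G), r = ∑ τ ∈ s, piR gr' τ r :=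
  gproj_exists_finset_sum _ _ _ r

include gm

lemma one_to_three
    (hyp : ∃ S : Set (AddSubgroup M), (∀ N ∈ S, GrSimpleSub gm N) ∧ sSup S = ⊤) :
    ∀ N : AddSubgroup M, IsGrSubmodule gm N →
      ∃ C : AddSubgroup M, IsGrSubmodule gm C ∧ N ⊓ C = ⊥ ∧ N ⊔ C = ⊤ := by
  obtain ⟨𝒮, h𝒮, hsup⟩ := hyp
  intro N hN
  have hzorn : ∀ c ⊆ {C : AddSubgroup M | IsGrSubmodule gm C ∧ N ⊓ C = ⊥}, IsChain (· ≤ ·) c →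
      ∃ ub ∈ {C : AddSubgroup M | IsGrSubmodule gm C ∧ N ⊓ C = ⊥}, ∀ z ∈ c, z ≤ ub := by
    intro c hc hchain
    rcases Set.eq_empty_or_nonempty c with rfl | hne
    · exact ⟨⊥, ⟨isGr_bot gm, inf_bot_eq N⟩, by simp⟩
    · refine ⟨sSup c, ⟨isGr_sSup gm fun K hK => (hc hK).1, ?_⟩, fun z hz => le_sSup hz⟩
      rw [eq_bot_iff]
      intro x hx
      rw [AddSubgroup.mem_inf] at hx
      obtain ⟨K, hK, hxK⟩ := (AddSubgroup.mem_sSup_of_directedOn hne hchain.directedOn).mp hx.2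
      have hxb : x ∈ N ⊓ K := AddSubgroup.mem_inf.mpr ⟨hx.1, hxK⟩
      rw [(hc hK).2] at hxb
      exact hxb
  obtain ⟨C, hCmax⟩ := zorn_le₀ _ hzorn
  obtain ⟨hCgr, hNC⟩ := hCmax.prop
  refine ⟨C, hCgr, hNC, ?_⟩
  rw [eq_top_iff, ← hsup]
  refine sSup_le fun S hS => ?_
  by_contra hSle
  have hSsimple := h𝒮 S hS
  have hinfgr : IsGrSubmodule gm (S ⊓ (N ⊔ C)) :=
    isGr_inf gm hSsimple.1 (isGr_sup gm hN hCgr)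
  rcases hSsimple.2.2 _ hinfgr inf_le_left with hbot | heq
  · have hZ : N ⊓ (C ⊔ S) = ⊥ := by
      rw [eq_bot_iff]
      intro x hx
      rw [AddSubgroup.mem_inf] at hx
      obtain ⟨cx, hcx, sx, hsx, hsum⟩ := AddSubgroup.mem_sup.mp hx.2
      have hsx' : sx ∈ S ⊓ (N ⊔ C) := by
        refine AddSubgroup.mem_inf.mpr ⟨hsx, ?_⟩
        have hx' : sx = x - cx := by rw [← hsum]; abel
        rw [hx']
        exact AddSubgroup.sub_mem _ (AddSubgroup.mem_sup_left hx.1)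
          (AddSubgroup.mem_sup_right hcx)
      rw [hbot] at hsx'
      have hsx0 : sx = 0 := (AddSubgroup.mem_bot).mp hsx'
      have hxc : x ∈ C := by
        rw [← hsum, hsx0, add_zero]; exact hcx
      have : x ∈ N ⊓ C := AddSubgroup.mem_inf.mpr ⟨hx.1, hxc⟩
      rw [hNC] at this
      exact this
    have hmem : C ⊔ S ∈ {C : AddSubgroup M | IsGrSubmodule gm C ∧ N ⊓ C = ⊥} :=
      ⟨isGr_sup gm hCgr hSsimple.1, hZ⟩
    have hle : C ⊔ S ≤ C := hCmax.2 hmem le_sup_left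
    exact hSle ((le_sup_right.trans hle).trans le_sup_right)
  · exact hSle (heq ▸ inf_le_right)

lemma exists_simple_le (hu : gm.IsUnital)
    (hcomp : ∀ N : AddSubgroup M, IsGrSubmodule gm N →
      ∃ C : AddSubgroup M, IsGrSubmodule gm C ∧ N ⊓ C = ⊥ ∧ N ⊔ C = ⊤)
    (N : AddSubgroup M) (hN : IsGrSubmodule gm N) (hNbot : N ≠ ⊥) :
    ∃ S : AddSubgroup M, GrSimpleSub gm S ∧ S ≤ N := by
  obtain ⟨m0, hm0N, hm0⟩ : ∃ m ∈ N, m ≠ 0 := by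
    by_contra h
    push_neg at h
    exact hNbot (eq_bot_iff.mpr fun x hx => (AddSubgroup.mem_bot).mpr (h x hx))
  obtain ⟨σ, hσ⟩ : ∃ σ, piM gm σ m0 ≠ 0 := by
    by_contra h
    push_neg at h
    obtain ⟨s, hs⟩ := piM_sum gm m0
    exact hm0 (by rw [hs]; exact Finset.sum_eq_zero fun σ _ => h σ)
  set m := piM gm σ m0 with hm
  have hmN : m ∈ N := (isGr_iff gm N |>.mp hN).2 m0 hm0N σ
  have hmσ : m ∈ gm.component σ := piM_mem gm σ m0
  set P := AddSubgroup.closure {x : M | ∃ r : R, x = r • m} with hPdef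
  have hPsm : ∀ (r : R), ∀ y ∈ P, r • y ∈ P := by
    intro r y hy
    refine AddSubgroup.closure_induction ?_ ?_ ?_ ?_ hy
    · rintro x ⟨s, rfl⟩
      exact AddSubgroup.subset_closure ⟨r * s, (gm.mul_smul r s m).symm⟩
    · rw [gm_smul_zero gm]; exact P.zero_mem
    · intro x y _ _ hx hy'
      rw [gm.smul_add]; exact P.add_mem hx hy'
    · intro x _ hx
      rw [gm_smul_neg gm]; exact P.neg_mem hx
  have hmP : m ∈ P := AddSubgroup.subset_closure ⟨gr.u σ.2.1, (hu σ m hmσ).symm⟩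
  have hPmin : ∀ Q : AddSubgroup M, (∀ (r : R), ∀ y ∈ Q, r • y ∈ Q) → m ∈ Q → P ≤ Q := by
    intro Q hQ hmQ
    refine (AddSubgroup.closure_le _).mpr ?_
    rintro x ⟨r, rfl⟩
    exact hQ r m hmQ
  have hPN : P ≤ N := hPmin N hN.1 hmN
  have hPgr : IsGrSubmodule gm P := by
    refine ⟨hPsm, le_antisymm ?_ (iSup_le fun υ => inf_le_left)⟩
    refine (AddSubgroup.closure_le _).mpr ?_
    rintro x ⟨r, rfl⟩
    obtain ⟨s, hs⟩ := piR_sum gr r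
    rw [hs, gm_sum_smul gm]
    refine AddSubgroup.sum_mem _ fun τ _ => ?_
    by_cases hcmp : GArrow.Composable τ σ
    · refine AddSubgroup.mem_iSup_of_mem (GArrow.comp τ σ hcmp) ?_
      refine AddSubgroup.mem_inf.mpr ⟨AddSubgroup.subset_closure ⟨_, rfl⟩, ?_⟩
      exact gm.smul_mem τ σ hcmp _ (piR_mem gr τ r) m hmσ
    · rw [gm.smul_eq_zero τ σ hcmp _ (piR_mem gr τ r) m hmσ]
      exact AddSubgroup.zero_mem _
  have hzorn : ∀ c ⊆ {K : AddSubgroup M | IsGrSubmodule gm K ∧ K ≤ P ∧ m ∉ K}, IsChain (· ≤ ·) c →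
      ∃ ub ∈ {K : AddSubgroup M | IsGrSubmodule gm K ∧ K ≤ P ∧ m ∉ K}, ∀ z ∈ c, z ≤ ub := by
    intro c hc hchain
    rcases Set.eq_empty_or_nonempty c with rfl | hne
    · exact ⟨⊥, ⟨isGr_bot gm, bot_le, fun h => hσ ((AddSubgroup.mem_bot).mp h)⟩, by simp⟩
    · refine ⟨sSup c, ⟨isGr_sSup gm fun K hK => (hc hK).1,
        sSup_le fun K hK => (hc hK).2.1, ?_⟩, fun z hz => le_sSup hz⟩
      intro hmem
      obtain ⟨K, hK, hmK⟩ := (AddSubgroup.mem_sSup_of_directedOn hne hchain.directedOn).mp hmem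
      exact (hc hK).2.2 hmK
  obtain ⟨K, hKmax⟩ := zorn_le₀ _ hzorn
  obtain ⟨hKgr, hKP, hmK⟩ := hKmax.prop
  obtain ⟨C, hCgr, hKC, hKCtop⟩ := hcomp K hKgr
  set S := C ⊓ P with hSdef
  have hSgr : IsGrSubmodule gm S := isGr_inf gm hCgr hPgr
  have hSP : S ≤ P := inf_le_right
  have hKS : K ⊔ S = P := by
    rw [hSdef, ← addSubgroup_modular gm K C P hKP, hKCtop, top_inf_eq]
  have hKSbot : K ⊓ S = ⊥ := by
    rw [eq_bot_iff, ← hKC]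
    exact inf_le_inf_left K inf_le_left
  have hSne : S ≠ ⊥ := by
    intro h
    rw [h, sup_bot_eq] at hKS
    exact hmK (hKS ▸ hmP)
  refine ⟨S, ⟨hSgr, hSne, ?_⟩, le_trans hSP hPN⟩
  intro L hLgr hLS
  by_cases hL : L = ⊥
  · exact Or.inl hL
  right
  by_cases hm' : m ∈ K ⊔ L
  · have hPKL : P ≤ K ⊔ L := hPmin _ (isGr_sup gm hKgr hLgr).1 hm'
    have hSL : S ≤ L := by
      have h1 : S ≤ (L ⊔ K) ⊓ S :=
        le_inf ((hSP.trans hPKL).trans (le_of_eq (sup_comm K L))) le_rfl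
      have h2 : (L ⊔ K) ⊓ S = L ⊔ K ⊓ S := addSubgroup_modular gm L K S hLS
      rw [h2, hKSbot, sup_bot_eq] at h1
      exact h1
    exact le_antisymm hLS hSL
  · have hmem : K ⊔ L ∈ {K : AddSubgroup M | IsGrSubmodule gm K ∧ K ≤ P ∧ m ∉ K} :=
      ⟨isGr_sup gm hKgr hLgr, sup_le hKP (hLS.trans hSP), hm'⟩
    have hle : K ⊔ L ≤ K := hKmax.2 hmem le_sup_left
    have hbot : L ≤ K ⊓ S := le_inf (le_sup_right.trans hle) hLS
    rw [hKSbot] at hbot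
    exact absurd (le_bot_iff.mp hbot) hL

lemma three_to_one (hu : gm.IsUnital)
    (hcomp : ∀ N : AddSubgroup M, IsGrSubmodule gm N →
      ∃ C : AddSubgroup M, IsGrSubmodule gm C ∧ N ⊓ C = ⊥ ∧ N ⊔ C = ⊤) :
    ∃ S : Set (AddSubgroup M), (∀ N ∈ S, GrSimpleSub gm N) ∧ sSup S = ⊤ := by
  refine ⟨{N | GrSimpleSub gm N}, fun N h => h, ?_⟩
  have hSoc : IsGrSubmodule gm (sSup {N | GrSimpleSub gm N}) :=
    isGr_sSup gm fun N hN => hN.1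
  obtain ⟨C, hCgr, hb, ht⟩ := hcomp _ hSoc
  have hC : C = ⊥ := by
    by_contra hC
    obtain ⟨S, hS, hSC⟩ := exists_simple_le gm hu hcomp C hCgr hC
    have h2 : S ≤ ⊥ := by rw [← hb]; exact le_inf (le_sSup hS) hSC
    exact hS.2.1 (le_bot_iff.mp h2)
  rw [hC, sup_bot_eq] at ht
  exact ht

lemma one_to_two
    (hyp : ∃ S : Set (AddSubgroup M), (∀ N ∈ S, GrSimpleSub gm N) ∧ sSup S = ⊤) :
    ∃ S : Set (AddSubgroup M), (∀ N ∈ S, GrSimpleSub gm N) ∧ sSupIndep S ∧ sSup S = ⊤ := by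
  obtain ⟨𝒮, h𝒮, hsup⟩ := hyp
  have hzorn : ∀ c ⊆ {T : Set (AddSubgroup M) | T ⊆ 𝒮 ∧ sSupIndep T}, IsChain (· ⊆ ·) c →
      ∃ ub ∈ {T : Set (AddSubgroup M) | T ⊆ 𝒮 ∧ sSupIndep T}, ∀ s ∈ c, s ⊆ ub := by
    intro c hc hchain
    refine ⟨⋃₀ c, ⟨Set.sUnion_subset fun T hT => (hc hT).1, ?_⟩,
      fun s hs => Set.subset_sUnion_of_mem hs⟩
    intro N hN
    obtain ⟨T₀, hT₀c, hNT₀⟩ := Set.mem_sUnion.mp hN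
    rw [AddSubgroup.disjoint_def]
    intro x hxN hxS
    have hle : sSup (⋃₀ c \ {N}) ≤ ⨆ T : c, sSup ((T : Set (AddSubgroup M)) \ {N}) := by
      refine sSup_le fun K hK => ?_
      obtain ⟨hKU, hKN⟩ := hK
      obtain ⟨T, hTc, hKT⟩ := Set.mem_sUnion.mp hKU
      exact le_trans (le_sSup (s := (T : Set (AddSubgroup M)) \ {N}) ⟨hKT, hKN⟩)
        (le_iSup (fun T : c => sSup ((T : Set (AddSubgroup M)) \ {N})) ⟨T, hTc⟩)
    have hnec : Nonempty c := ⟨⟨T₀, hT₀c⟩⟩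
    have hdir : Directed (· ≤ ·)
        (fun T : c => sSup ((T : Set (AddSubgroup M)) \ {N})) := by
      rintro ⟨T₁, h₁⟩ ⟨T₂, h₂⟩
      rcases hchain.total h₁ h₂ with h | h
      · exact ⟨⟨T₂, h₂⟩, sSup_le_sSup (Set.diff_subset_diff_left h), le_rfl⟩
      · exact ⟨⟨T₁, h₁⟩, le_rfl, sSup_le_sSup (Set.diff_subset_diff_left h)⟩
    obtain ⟨⟨T₁, hT₁c⟩, hx₁⟩ := (AddSubgroup.mem_iSup_of_directed hdir).mp (hle hxS)
    rcases hchain.total hT₀c hT₁c with h | h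
    · exact AddSubgroup.disjoint_def.mp ((hc hT₁c).2 (h hNT₀)) hxN hx₁
    · exact AddSubgroup.disjoint_def.mp ((hc hT₀c).2 hNT₀) hxN
        (sSup_le_sSup (Set.diff_subset_diff_left h) hx₁)
  obtain ⟨T, hTmax⟩ := zorn_subset _ hzorn
  obtain ⟨hT𝒮, hTind⟩ := hTmax.prop
  refine ⟨T, fun N hN => h𝒮 N (hT𝒮 hN), hTind, ?_⟩
  rw [eq_top_iff, ← hsup]
  refine sSup_le fun S hS => ?_
  by_contra hSle
  have hTgr : IsGrSubmodule gm (sSup T) := isGr_sSup gm fun N hN => (h𝒮 N (hT𝒮 hN)).1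
  have hST : S ⊓ sSup T = ⊥ := by
    rcases (h𝒮 S hS).2.2 _ (isGr_inf gm (h𝒮 S hS).1 hTgr) inf_le_left with h | h
    · exact h
    · exact absurd (h ▸ inf_le_right) hSle
  have hSnotT : S ∉ T := fun h => hSle (le_sSup h)
  have hT' : insert S T ∈ {T : Set (AddSubgroup M) | T ⊆ 𝒮 ∧ sSupIndep T} := by
    refine ⟨Set.insert_subset hS hT𝒮, ?_⟩
    intro N hN
    rcases Set.mem_insert_iff.mp hN with rfl | hNT
    · rw [Set.insert_diff_self_of_notMem hSnotT]
      exact disjoint_iff.mpr hST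
    · have hSN : S ∉ ({N} : Set (AddSubgroup M)) :=
        fun h => hSnotT ((Set.mem_singleton_iff.mp h) ▸ hNT)
      rw [Set.insert_diff_of_notMem _ hSN, sSup_insert]
      rw [AddSubgroup.disjoint_def]
      intro x hxN hxsup
      obtain ⟨sx, hsx, tx, htx, hsum⟩ := AddSubgroup.mem_sup.mp hxsup
      have htT : tx ∈ sSup T := sSup_le_sSup (Set.diff_subset : T \ {N} ⊆ T) htx
      have hsx0 : sx = 0 := by
        have hmem : sx ∈ S ⊓ sSup T := by
          refine AddSubgroup.mem_inf.mpr ⟨hsx, ?_⟩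
          have h' : sx = x - tx := by rw [← hsum]; abel
          rw [h']
          exact AddSubgroup.sub_mem _ (le_sSup hNT hxN) htT
        rw [hST] at hmem
        exact (AddSubgroup.mem_bot).mp hmem
      have hx : x = tx := by rw [← hsum, hsx0, zero_add]
      exact AddSubgroup.disjoint_def.mp (hTind hNT) hxN (hx ▸ htx)
  have hsub : insert S T ⊆ T := hTmax.2 hT' (Set.subset_insert S T)
  exact hSnotT (hsub (Set.mem_insert S T))

end MainLemmas


/-- For a graded unital module `M` the following are equivalent:
(i) `M` is a sum of simple graded submodules; (ii) `M` is a direct sum of simple graded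
submodules; (iii) every graded submodule of `M` is a direct summand with graded
complement. -/
theorem stmt18 {G R M : Type*} [Groupoid G] [NonUnitalRing R] [AddCommGroup M] [SMul R M]
    (gr : OUGrading G R) (gm : GrModule gr M) (hu : gm.IsUnital) :
    ((∃ S : Set (AddSubgroup M), (∀ N ∈ S, GrSimpleSub gm N) ∧ sSup S = ⊤) ↔
      (∃ S : Set (AddSubgroup M), (∀ N ∈ S, GrSimpleSub gm N) ∧ sSupIndep S ∧
        sSup S = ⊤)) ∧
    ((∃ S : Set (AddSubgroup M), (∀ N ∈ S, GrSimpleSub gm N) ∧ sSup S = ⊤) ↔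
      (∀ N : AddSubgroup M, IsGrSubmodule gm N →
        ∃ C : AddSubgroup M, IsGrSubmodule gm C ∧ N ⊓ C = ⊥ ∧ N ⊔ C = ⊤)) := by
  refine ⟨⟨one_to_two gm, ?_⟩, one_to_three gm, three_to_one gm hu⟩
  rintro ⟨S, h1, _, h3⟩
  exact ⟨S, h1, h3⟩
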